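/- (Corollary 1, guarantee of MWPS.) Under the assumptions of Proposition 1 (initial policy sequence with MWPS at least S_0, and each policy update satisfying the γ_k-discounted remaining-MWPS constraint at every state), if additionally the factors are chosen so that (∏_{k=1}^{N−1} γ_k) · S_0 = S for a prescribed level S ∈ [0,1], then the shrinking-horizon closed-loop system, which applies at each time k the first kernel κ^k_k of the k-th policy sequence, satisfies the prescribed mission-wide probability of safety constraint: P[s_{1,…,N} ∈ 𝕊 | s_0; κ^0_0, κ^1_1, …, κ^{N−1}_{N−1}] ≥ S. -/
import Mathlib


open MeasureTheory ProbabilityTheory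

/-- `safeProb κ S k m σ` : probability that the time-inhomogeneous Markov chain with
kernels `κ`, started at state `σ` at time `k`, has its next `m` states
(at times `k+1, …, k+m`) all in `S` (the remaining mission-wide probability of safety). -/
noncomputable def safeProb {E : Type*} [MeasurableSpace E]
    (κ : ℕ → Kernel E E) (S : Set E) : ℕ → ℕ → E → ENNReal
  | _, 0, _ => 1
  | k, m + 1, σ => ∫⁻ σ', S.indicator (safeProb κ S (k + 1) m) σ' ∂(κ k σ)

lemma safeProb_congr {E : Type*} [MeasurableSpace E]
    (ν ν' : ℕ → Kernel E E) (S : Set E) :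
    ∀ (m k : ℕ), (∀ t, k ≤ t → t < k + m → ν t = ν' t) →
      ∀ σ, safeProb ν S k m σ = safeProb ν' S k m σ
  | 0, k, _, σ => rfl
  | m + 1, k, h, σ => by
    simp only [safeProb]
    rw [h k le_rfl (by omega)]
    refine lintegral_congr fun x => ?_
    by_cases hx : x ∈ S
    · simp only [Set.indicator_of_mem hx]
      exact safeProb_congr ν ν' S m (k + 1) (fun t ht ht' => h t (by omega) (by omega)) x
    · simp [Set.indicator_of_notMem hx]

lemma safeProb_mul_le {E : Type*} [MeasurableSpace E]
    (ν ν' : ℕ → Kernel E E) (S : Set E) (c : ENNReal) (j m' : ℕ)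
    (hstep : ∀ σ, c * safeProb ν S j m' σ ≤ safeProb ν' S j m' σ) :
    ∀ (d k : ℕ), k + d = j → (∀ t, k ≤ t → t < j → ν t = ν' t) →
      ∀ σ, c * safeProb ν S k (d + m') σ ≤ safeProb ν' S k (d + m') σ
  | 0, k, hk, _, σ => by subst hk; simpa using hstep σ
  | d + 1, k, hk, hagree, σ => by
    have hrw : d + 1 + m' = (d + m') + 1 := by omega
    rw [hrw]
    simp only [safeProb]
    rw [hagree k le_rfl (by omega)]
    calc c * ∫⁻ σ', S.indicator (safeProb ν S (k + 1) (d + m')) σ' ∂((ν' k) σ)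
        ≤ ∫⁻ σ', c * S.indicator (safeProb ν S (k + 1) (d + m')) σ' ∂((ν' k) σ) :=
          lintegral_const_mul_le _ _
      _ ≤ ∫⁻ σ', S.indicator (safeProb ν' S (k + 1) (d + m')) σ' ∂((ν' k) σ) := by
          refine lintegral_mono fun x => ?_
          by_cases hx : x ∈ S
          · simp only [Set.indicator_of_mem hx]
            exact safeProb_mul_le ν ν' S c j m' hstep d (k + 1) (by omega)
              (fun t ht ht' => hagree t (by omega) ht') x
          · simp [Set.indicator_of_notMem hx]

/-- **Corollary 1, guarantee of MWPS.** Under the assumptions of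
Proposition 1 (initial policy sequence with MWPS at least `S₀`, and each policy update
satisfying the `γ k`-discounted remaining-MWPS constraint at every state), if in addition
the factors satisfy `(∏ k ∈ {1,…,N-1}, γ k) * S₀ = Slvl` for a prescribed level
`Slvl ∈ [0,1]`, then the shrinking-horizon closed-loop system `t ↦ κ t t` satisfies the
prescribed mission-wide probability of safety constraint `MWPS ≥ Slvl`. -/
theorem mwps_guarantee {E : Type*} [MeasurableSpace E]
    (κ : ℕ → ℕ → Kernel E E) (hκ : ∀ j t, IsMarkovKernel (κ j t))
    (S : Set E) (hS : MeasurableSet S)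
    (N : ℕ) (hN : 1 ≤ N) (s₀ : E)
    (S₀ : ENNReal) (hS₀ : S₀ ≤ 1)
    (γ : ℕ → ENNReal)
    (hγ0 : ∀ k ∈ Finset.Icc 1 (N - 1), 0 < γ k)
    (hγ1 : ∀ k ∈ Finset.Icc 1 (N - 1), γ k ≤ 1)
    (hinit : S₀ ≤ safeProb (κ 0) S 0 N s₀)
    (hupdate : ∀ k ∈ Finset.Icc 1 (N - 1), ∀ σ : E,
      γ k * safeProb (κ (k - 1)) S k (N - k) σ ≤ safeProb (κ k) S k (N - k) σ)
    (Slvl : ENNReal) (hSlvl : Slvl ≤ 1)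
    (hchoice : (∏ k ∈ Finset.Icc 1 (N - 1), γ k) * S₀ = Slvl) :
    Slvl ≤ safeProb (fun t => κ t t) S 0 N s₀ := by
  -- Auxiliary: the "mixed" closed-loop chain up to time j.
  have key : ∀ j, j ≤ N - 1 →
      (∏ k ∈ Finset.Icc 1 j, γ k) * S₀ ≤
        safeProb (fun t => κ (min t j) t) S 0 N s₀ := by
    intro j
    induction j with
    | zero =>
      intro _
      rw [Finset.Icc_eq_empty (by omega), Finset.prod_empty, one_mul]
      have : safeProb (fun t => κ (min t 0) t) S 0 N s₀ = safeProb (κ 0) S 0 N s₀ := by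
        refine safeProb_congr _ _ S N 0 (fun t _ _ => ?_) s₀
        exact congrArg (fun i => κ i t) (by omega)
      rw [this]
      simpa using hinit
    | succ j ih =>
      intro hj
      have hjm : j + 1 ∈ Finset.Icc 1 (N - 1) := by
        simp only [Finset.mem_Icc]; omega
      have hprev := ih (by omega)
      -- step from mixed chain at j to mixed chain at j+1
      have hstep : ∀ σ, γ (j + 1) * safeProb (fun t => κ (min t j) t) S (j + 1) (N - (j + 1)) σ ≤
          safeProb (fun t => κ (min t (j + 1)) t) S (j + 1) (N - (j + 1)) σ := by
        intro σ
        have h1 : safeProb (fun t => κ (min t j) t) S (j + 1) (N - (j + 1)) σ =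
            safeProb (κ j) S (j + 1) (N - (j + 1)) σ := by
          refine safeProb_congr _ _ S _ _ (fun t ht _ => ?_) σ
          exact congrArg (fun i => κ i t) (by omega)
        have h2 : safeProb (fun t => κ (min t (j + 1)) t) S (j + 1) (N - (j + 1)) σ =
            safeProb (κ (j + 1)) S (j + 1) (N - (j + 1)) σ := by
          refine safeProb_congr _ _ S _ _ (fun t ht _ => ?_) σ
          exact congrArg (fun i => κ i t) (by omega)
        rw [h1, h2]
        simpa using hupdate (j + 1) hjm σ
      have hglob : ∀ σ, γ (j + 1) * safeProb (fun t => κ (min t j) t) S 0 N σ ≤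
          safeProb (fun t => κ (min t (j + 1)) t) S 0 N σ := by
        have hN' : N = (j + 1) + (N - (j + 1)) := by omega
        intro σ
        have := safeProb_mul_le (fun t => κ (min t j) t) (fun t => κ (min t (j + 1)) t)
          S (γ (j + 1)) (j + 1) (N - (j + 1)) hstep (j + 1) 0 (by omega)
          (fun t _ ht' => congrArg (fun i => κ i t) (by omega)) σ
        rw [hN']
        exact this
      have hprod : (∏ k ∈ Finset.Icc 1 (j + 1), γ k) * S₀ =
          γ (j + 1) * ((∏ k ∈ Finset.Icc 1 j, γ k) * S₀) := by
        rw [Finset.prod_Icc_succ_top (by omega)]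
        ring
      calc (∏ k ∈ Finset.Icc 1 (j + 1), γ k) * S₀
          = γ (j + 1) * ((∏ k ∈ Finset.Icc 1 j, γ k) * S₀) := hprod
        _ ≤ γ (j + 1) * safeProb (fun t => κ (min t j) t) S 0 N s₀ :=
            mul_le_mul_right hprev _
        _ ≤ safeProb (fun t => κ (min t (j + 1)) t) S 0 N s₀ := hglob s₀
  have hfin := key (N - 1) le_rfl
  have hfinal : safeProb (fun t => κ (min t (N - 1)) t) S 0 N s₀ =
      safeProb (fun t => κ t t) S 0 N s₀ := by
    refine safeProb_congr _ _ S N 0 (fun t _ ht' => ?_) s₀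
    exact congrArg (fun i => κ i t) (by omega)
  rw [hfinal] at hfin
  rw [← hchoice]
  exact hfin
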